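/- Let $K$ be a multiple of $\ell \geq 1$, $\pmb{w}$ a nonincreasing nonnegative weight vector of length $K$ summing to 1, and $\pmb{a}$ a nonnegative real vector of length $K$. Define the aggregated vectors $\overline{a}_k = \frac{1}{\ell}(a_{(k-1)\ell+1} + \dots + a_{k\ell})$ and $\overline{w}_k = w_{(k-1)\ell+1} + \dots + w_{k\ell}$ for $k \in [K/\ell]$. Then $\mathrm{OWA}_{\overline{\pmb{w}}}(\overline{\pmb{a}}) \leq \mathrm{OWA}_{\pmb{w}}(\pmb{a})$. -/

import Mathlib

/-- OWA of a vector with nonincreasing weights: weights are applied to the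
entries sorted in nonincreasing order. -/
noncomputable def OWA {K : ℕ} (w a : Fin K → ℝ) : ℝ :=
  ∑ k, w k * a (Tuple.sort (fun i => -a i) k)

/-- Block-aggregated weights: the `k`-th aggregated weight is the sum of the
`ℓ` weights in the `k`-th block. -/
noncomputable def aggW (m ℓ : ℕ) (w : Fin (m * ℓ) → ℝ) : Fin m → ℝ :=
  fun k => ∑ i : Fin ℓ, w (finProdFinEquiv (k, i))

/-- Block-aggregated vector: the `k`-th aggregated entry is the average of the
`ℓ` entries in the `k`-th block. -/
noncomputable def aggA (m ℓ : ℕ) (a : Fin (m * ℓ) → ℝ) : Fin m → ℝ :=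
  fun k => (∑ i : Fin ℓ, a (finProdFinEquiv (k, i))) / ℓ

/-- Any permuted weighted sum is at most the OWA when weights are antitone. -/
lemma sum_mul_perm_le_OWA {n : ℕ} (w a : Fin n → ℝ) (hw : Antitone w)
    (ρ : Equiv.Perm (Fin n)) : ∑ t, w t * a (ρ t) ≤ OWA w a := by
  set σ := Tuple.sort (fun i => -a i) with hσ
  have hmono : Monotone ((fun i => -a i) ∘ σ) := Tuple.monotone_sort _
  have hanti : Antitone (fun t => a (σ t)) := by
    intro i j hij
    have := hmono hij
    simpa using this
  have hmv : Monovary w (fun t => a (σ t)) := by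
    intro i j h
    rcases le_or_gt j i with hji | hij
    · exact hw hji
    · exact absurd (hanti hij.le) (not_le.mpr h)
  have key := hmv.sum_smul_comp_perm_le_sum_smul (σ := σ⁻¹ * ρ)
  simp only [smul_eq_mul, Equiv.Perm.mul_apply, Equiv.Perm.coe_inv, Equiv.apply_symm_apply] at key
  simpa [OWA] using key

/-- Lemma 3(a): the OWA of the aggregated vector with aggregated weights is at
most the OWA of the original vector. -/
theorem owa_aggregation_lower (m ℓ : ℕ) (hℓ : 1 ≤ ℓ)
    (a w : Fin (m * ℓ) → ℝ)
    (ha : ∀ k, 0 ≤ a k) (hw : Antitone w) (hw0 : ∀ k, 0 ≤ w k)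
    (hw1 : ∑ k, w k = 1) :
    OWA (aggW m ℓ w) (aggA m ℓ a) ≤ OWA w a := by
  haveI : NeZero ℓ := ⟨by omega⟩
  have hℓR : (0:ℝ) < (ℓ : ℝ) := by exact_mod_cast Nat.lt_of_lt_of_le Nat.zero_lt_one hℓ
  set π := Tuple.sort (fun k => -(aggA m ℓ a) k) with hπ
  set e := (finProdFinEquiv : Fin m × Fin ℓ ≃ Fin (m * ℓ)) with he
  -- the shifted sums
  have hshift : ∀ k : Fin m, ∀ i : Fin ℓ,
      ∑ s : Fin ℓ, a (e (π k, i + s)) = ∑ j : Fin ℓ, a (e (π k, j)) :=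
    fun k i => Equiv.sum_comp (Equiv.addLeft i) (fun j => a (e (π k, j)))
  have hOWAbar : OWA (aggW m ℓ w) (aggA m ℓ a)
      = (ℓ:ℝ)⁻¹ * ∑ s : Fin ℓ, ∑ k : Fin m, ∑ i : Fin ℓ,
          w (e (k, i)) * a (e (π k, i + s)) := by
    have h0 : OWA (aggW m ℓ w) (aggA m ℓ a) = ∑ k, aggW m ℓ w k * aggA m ℓ a (π k) := rfl
    rw [h0, Finset.sum_comm]
    have : ∀ k : Fin m, ∑ s : Fin ℓ, ∑ i : Fin ℓ, w (e (k, i)) * a (e (π k, i + s))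
        = ∑ i : Fin ℓ, w (e (k, i)) * ∑ j : Fin ℓ, a (e (π k, j)) := by
      intro k
      rw [Finset.sum_comm]
      refine Finset.sum_congr rfl fun i _ => ?_
      rw [← Finset.mul_sum, hshift k i]
    simp only [this]
    rw [Finset.mul_sum]
    refine Finset.sum_congr rfl fun k _ => ?_
    simp only [aggW, aggA, ← Finset.sum_mul]
    field_simp
    rfl
  have hbound : ∀ s : Fin ℓ, (∑ k : Fin m, ∑ i : Fin ℓ,
      w (e (k, i)) * a (e (π k, i + s))) ≤ OWA w a := by
    intro s
    set ρ : Equiv.Perm (Fin (m * ℓ)) :=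
      e.symm.trans ((Equiv.prodCongr (π : Equiv.Perm (Fin m)) (Equiv.addRight s)).trans e) with hρ
    have hρ' : ∀ k i, ρ (e (k, i)) = e (π k, i + s) := by
      intro k i; simp [hρ]
    have := sum_mul_perm_le_OWA w a hw ρ
    calc ∑ k : Fin m, ∑ i : Fin ℓ, w (e (k, i)) * a (e (π k, i + s))
        = ∑ p : Fin m × Fin ℓ, w (e p) * a (ρ (e p)) := by
          rw [Fintype.sum_prod_type]
          exact Finset.sum_congr rfl fun k _ => Finset.sum_congr rfl fun i _ => by
            rw [hρ' k i]
      _ = ∑ t, w t * a (ρ t) := Equiv.sum_comp e (fun t => w t * a (ρ t))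
      _ ≤ OWA w a := this
  calc OWA (aggW m ℓ w) (aggA m ℓ a)
      = (ℓ:ℝ)⁻¹ * ∑ s : Fin ℓ, ∑ k : Fin m, ∑ i : Fin ℓ,
          w (e (k, i)) * a (e (π k, i + s)) := hOWAbar
    _ ≤ (ℓ:ℝ)⁻¹ * (ℓ * OWA w a) := by
        apply mul_le_mul_of_nonneg_left _ (by positivity)
        calc (∑ s : Fin ℓ, ∑ k : Fin m, ∑ i : Fin ℓ, w (e (k, i)) * a (e (π k, i + s)))
            ≤ ∑ _s : Fin ℓ, OWA w a := Finset.sum_le_sum fun s _ => hbound s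
          _ = ℓ * OWA w a := by simp [Finset.sum_const, nsmul_eq_mul]
    _ = OWA w a := by field_simp
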